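/- The function ρ(t₁,t₂) = ((1-12t₁t₂)^{3/2} + 18t₁t₂ - 1)/(108 t₂²), defined for t₂ ≠ 0 and 12t₁t₂ < 1, satisfies the homogeneous Monge–Ampère equation ρ₁₁ρ₂₂ - ρ₁₂² = 0, and its second derivative in t₁ is ρ₁₁ = (1-12t₁t₂)^{-1/2} > 0. -/

import Mathlib

noncomputable section

/-- Partial derivative in the first variable. -/
def pd1 (f : ℝ → ℝ → ℝ) : ℝ → ℝ → ℝ := fun t1 t2 => deriv (fun s => f s t2) t1

/-- Partial derivative in the second variable. -/
def pd2 (f : ℝ → ℝ → ℝ) : ℝ → ℝ → ℝ := fun t1 t2 => deriv (fun s => f t1 s) t2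

/-- The explicit solution `ρ` of the homogeneous Monge–Ampère equation. -/
def rho : ℝ → ℝ → ℝ := fun t1 t2 =>
  ((1 - 12 * t1 * t2) ^ ((3 : ℝ) / 2) + 18 * t1 * t2 - 1) / (108 * t2 ^ 2)

lemma inner1 (t2 x : ℝ) : HasDerivAt (fun s : ℝ => 1 - 12 * s * t2) (-(12 * t2)) x := by
  simpa using (((hasDerivAt_id x).const_mul 12).mul_const t2).const_sub 1

lemma inner2 (t1 x : ℝ) : HasDerivAt (fun s : ℝ => 1 - 12 * t1 * s) (-(12 * t1)) x := by
  simpa using ((hasDerivAt_id x).const_mul (12 * t1)).const_sub 1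

lemma pd1_rho (t1 t2 : ℝ) (ht2 : t2 ≠ 0) :
    pd1 rho t1 t2 = (1 - (1 - 12 * t1 * t2) ^ ((1:ℝ)/2)) / (6 * t2) := by
  have hr := (Real.hasDerivAt_rpow_const (x := 1 - 12*t1*t2) (p := (3:ℝ)/2) (Or.inr (by norm_num))).comp t1 (inner1 t2 t1)
  have hlin : HasDerivAt (fun s : ℝ => 18 * s * t2) (18 * t2) t1 := by
    simpa using ((hasDerivAt_id t1).const_mul 18).mul_const t2
  have h2 := ((hr.add hlin).sub_const 1).div_const (108 * t2^2)
  simp only [Function.comp_def, Pi.add_apply] at h2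
  unfold pd1 rho
  rw [h2.deriv]
  have h3 : (3:ℝ)/2 - 1 = 1/2 := by norm_num
  rw [h3]
  field_simp
  ring

lemma pd2_rho (t1 s : ℝ) (hs : s ≠ 0) :
    pd2 rho t1 s = (18*t1*s - 18*t1*s*(1-12*t1*s)^((1:ℝ)/2)
      - 2*((1-12*t1*s)^((3:ℝ)/2) + 18*t1*s - 1))/(108*s^3) := by
  have hr := (Real.hasDerivAt_rpow_const (x := 1 - 12*t1*s) (p := (3:ℝ)/2) (Or.inr (by norm_num))).comp s (inner2 t1 s)
  have hlin : HasDerivAt (fun x : ℝ => 18 * t1 * x) (18 * t1) s := by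
    simpa using (hasDerivAt_id s).const_mul (18 * t1)
  have hN := (hr.add hlin).sub_const 1
  have hD : HasDerivAt (fun x : ℝ => 108 * x^2) (216 * s) s := by
    have := (hasDerivAt_pow 2 s).const_mul (108:ℝ); exact this.congr_deriv (by norm_num; ring)
  have hDne : (108 : ℝ) * s^2 ≠ 0 := by positivity
  have h2 := hN.div hD hDne
  simp only [Function.comp_def, Pi.add_apply, Pi.div_def] at h2
  unfold pd2 rho
  rw [h2.deriv]
  have h3 : (3:ℝ)/2 - 1 = 1/2 := by norm_num
  rw [h3]
  field_simp
  ring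

lemma pd11 (t1 t2 : ℝ) (ht2 : t2 ≠ 0) (hu : 12 * t1 * t2 < 1) :
    pd1 (pd1 rho) t1 t2 = (1 - 12 * t1 * t2) ^ (-(1:ℝ)/2) := by
  have hfe : (fun s => pd1 rho s t2) = fun s => (1 - (1 - 12 * s * t2) ^ ((1:ℝ)/2)) / (6 * t2) := by
    funext s; exact pd1_rho s t2 ht2
  have hune : 1 - 12 * t1 * t2 ≠ 0 := by linarith
  have hr := (Real.hasDerivAt_rpow_const (x := 1 - 12*t1*t2) (p := (1:ℝ)/2) (Or.inl hune)).comp t1 (inner1 t2 t1)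
  have h2 := (hr.const_sub 1).div_const (6 * t2)
  simp only [Function.comp_def] at h2
  show deriv (fun s => pd1 rho s t2) t1 = _
  rw [hfe, h2.deriv]
  have h3 : (1:ℝ)/2 - 1 = -(1/2) := by norm_num
  have h4 : -(1:ℝ)/2 = -(1/2) := by norm_num
  rw [h3, h4, div_eq_iff (mul_ne_zero (by norm_num : (6:ℝ) ≠ 0) ht2)]
  ring

lemma pd12 (t1 t2 : ℝ) (ht2 : t2 ≠ 0) (hu : 12 * t1 * t2 < 1) :
    pd2 (pd1 rho) t1 t2 = (1 - (1 - 12*t1*t2) ^ ((1:ℝ)/2))^2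
      / (12 * t2^2 * (1 - 12*t1*t2) ^ ((1:ℝ)/2)) := by
  have hupos : 0 < 1 - 12 * t1 * t2 := by linarith
  have hune : 1 - 12 * t1 * t2 ≠ 0 := ne_of_gt hupos
  have hEE : (fun s => pd1 rho t1 s) =ᶠ[nhds t2]
      fun s => (1 - (1 - 12 * t1 * s) ^ ((1:ℝ)/2)) / (6 * s) := by
    filter_upwards [eventually_ne_nhds ht2] with s hs
    exact pd1_rho t1 s hs
  have hr := (Real.hasDerivAt_rpow_const (x := 1 - 12*t1*t2) (p := (1:ℝ)/2) (Or.inl hune)).comp t2 (inner2 t1 t2)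
  have hden : HasDerivAt (fun s : ℝ => 6 * s) 6 t2 := by
    simpa using (hasDerivAt_id t2).const_mul (6:ℝ)
  have h2 := (hr.const_sub 1).div hden (mul_ne_zero (by norm_num) ht2)
  simp only [Function.comp_def, Pi.div_def] at h2
  show deriv (fun s => pd1 rho t1 s) t2 = _
  rw [hEE.deriv_eq, h2.deriv]
  set v := (1 - 12*t1*t2) ^ ((1:ℝ)/2) with hv
  have hvpos : 0 < v := Real.rpow_pos_of_pos hupos _
  have hv2 : v * v = 1 - 12 * t1 * t2 := by
    rw [hv, ← Real.rpow_add hupos]; norm_num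
  have hneg : (1 - 12*t1*t2) ^ ((1:ℝ)/2 - 1) = v⁻¹ := by
    rw [show (1:ℝ)/2 - 1 = -(1/2) by norm_num, Real.rpow_neg hupos.le, hv]
  rw [hneg]
  have ht1 : t1 = (1 - v * v) / (12 * t2) := by
    field_simp
    linarith [hv2]
  rw [ht1]
  field_simp
  ring

lemma pd2_rho_cube (t1 s : ℝ) (hs : s ≠ 0) (hup : 0 < 1 - 12 * t1 * s) :
    pd2 rho t1 s = ((1 - (1 - 12 * t1 * s) ^ ((1:ℝ)/2)) / (6 * s))^3 := by
  rw [pd2_rho t1 s hs]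
  set v := (1 - 12*t1*s) ^ ((1:ℝ)/2) with hv
  have hvpos : 0 < v := Real.rpow_pos_of_pos hup _
  have hv2 : v * v = 1 - 12 * t1 * s := by
    rw [hv, ← Real.rpow_add hup]; norm_num
  have h32 : (1 - 12*t1*s) ^ ((3:ℝ)/2) = (1 - 12*t1*s) * v := by
    rw [hv, ← Real.rpow_one_add' hup.le (by norm_num : (1:ℝ) + 1/2 ≠ 0)]
    norm_num
  rw [h32]
  have ht1 : t1 = (1 - v * v) / (12 * s) := by
    field_simp; linarith [hv2]
  rw [ht1]
  field_simp
  ring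

lemma pd22 (t1 t2 : ℝ) (ht2 : t2 ≠ 0) (hu : 12 * t1 * t2 < 1) :
    pd2 (pd2 rho) t1 t2 = (1 - (1 - 12*t1*t2) ^ ((1:ℝ)/2))^4
      / (144 * t2^4 * (1 - 12*t1*t2) ^ ((1:ℝ)/2)) := by
  have hupos : 0 < 1 - 12 * t1 * t2 := by linarith
  have hune : 1 - 12 * t1 * t2 ≠ 0 := ne_of_gt hupos
  have hcont : ContinuousAt (fun s : ℝ => 1 - 12 * t1 * s) t2 := by fun_prop
  have hev : ∀ᶠ s in nhds t2, 0 < 1 - 12 * t1 * s := by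
    have := hcont (Ioi_mem_nhds hupos)
    filter_upwards [this] with s hs
    exact hs
  have hEE : (fun s => pd2 rho t1 s) =ᶠ[nhds t2]
      fun s => ((1 - (1 - 12 * t1 * s) ^ ((1:ℝ)/2)) / (6 * s))^3 := by
    filter_upwards [eventually_ne_nhds ht2, hev] with s hs hup
    exact pd2_rho_cube t1 s hs hup
  have hr := (Real.hasDerivAt_rpow_const (x := 1 - 12*t1*t2) (p := (1:ℝ)/2) (Or.inl hune)).comp t2 (inner2 t1 t2)
  have hden : HasDerivAt (fun s : ℝ => 6 * s) 6 t2 := by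
    simpa using (hasDerivAt_id t2).const_mul (6:ℝ)
  have h2 := ((hr.const_sub 1).div hden (mul_ne_zero (by norm_num) ht2)).pow 3
  simp only [Function.comp_def, Pi.div_def, Pi.pow_def] at h2
  show deriv (fun s => pd2 rho t1 s) t2 = _
  rw [hEE.deriv_eq, h2.deriv]
  set v := (1 - 12*t1*t2) ^ ((1:ℝ)/2) with hv
  have hvpos : 0 < v := Real.rpow_pos_of_pos hupos _
  have hv2 : v * v = 1 - 12 * t1 * t2 := by
    rw [hv, ← Real.rpow_add hupos]; norm_num
  have hneg : (1 - 12*t1*t2) ^ ((1:ℝ)/2 - 1) = v⁻¹ := by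
    rw [show (1:ℝ)/2 - 1 = -(1/2) by norm_num, Real.rpow_neg hupos.le, hv]
  rw [hneg]
  have ht1 : t1 = (1 - v * v) / (12 * t2) := by
    field_simp; linarith [hv2]
  rw [ht1]
  field_simp
  have ht2' : t2 ^ 2 * t2⁻¹ ^ 2 = 1 := by field_simp
  linear_combination (12 - 48*v + 72*v^2 - 48*v^3 + 12*v^4) * ht2'

theorem stmt13 :
    ∀ t1 t2 : ℝ, t2 ≠ 0 → 12 * t1 * t2 < 1 →
      pd1 (pd1 rho) t1 t2 = (1 - 12 * t1 * t2) ^ (-(1 : ℝ) / 2) ∧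
      0 < pd1 (pd1 rho) t1 t2 ∧
      pd1 (pd1 rho) t1 t2 * pd2 (pd2 rho) t1 t2 - (pd2 (pd1 rho) t1 t2) ^ 2 = 0 := by
  intro t1 t2 ht2 hu
  have hupos : 0 < 1 - 12 * t1 * t2 := by linarith
  refine ⟨pd11 t1 t2 ht2 hu, ?_, ?_⟩
  · rw [pd11 t1 t2 ht2 hu]
    exact Real.rpow_pos_of_pos hupos _
  · rw [pd11 t1 t2 ht2 hu, pd12 t1 t2 ht2 hu, pd22 t1 t2 ht2 hu]
    have hneg : (1 - 12*t1*t2) ^ (-(1:ℝ)/2) = ((1 - 12*t1*t2) ^ ((1:ℝ)/2))⁻¹ := by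
      rw [show -(1:ℝ)/2 = -(1/2) by norm_num, Real.rpow_neg hupos.le]
    rw [hneg]
    set v := (1 - 12*t1*t2) ^ ((1:ℝ)/2) with hv
    have hvpos : 0 < v := Real.rpow_pos_of_pos hupos _
    field_simp
    ring
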